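/- Theorem T3 is valid in possibilistic Gödel models: for any π : W → [0,1] and f : W → [0,1], Π(λw. ¬¬f(w)) ≤ ¬¬Π(f), where ¬x = x ⇒_G 0. -/
import Mathlib


open scoped Classical

instance : Fact ((0:ℝ) ≤ 1) := ⟨zero_le_one⟩

/-- Gödel implication on the unit interval. -/
noncomputable def gimp (x y : unitInterval) : unitInterval := if x ≤ y then 1 else y

/-- Necessity measure induced by a possibility distribution `π`. -/
noncomputable def Nec {W : Type*} (π f : W → unitInterval) : unitInterval :=
  ⨅ w, gimp (π w) (f w)

/-- Possibility measure induced by a possibility distribution `π`. -/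
noncomputable def Pos {W : Type*} (π f : W → unitInterval) : unitInterval :=
  ⨆ w, min (π w) (f w)

noncomputable def gneg (x : unitInterval) : unitInterval := gimp x 0

lemma gneg_zero : gneg 0 = 1 := by simp [gneg, gimp]

lemma gneg_of_ne (x : unitInterval) (h : x ≠ 0) : gneg x = 0 := by
  have : ¬ x ≤ 0 := fun h' => h (le_antisymm h' x.2.1)
  simp [gneg, gimp, this]

theorem stmt15 {W : Type*} [Nonempty W] (π f : W → unitInterval) :
    Pos π (fun w => gneg (gneg (f w))) ≤ gneg (gneg (Pos π f)) := by
  by_cases h : Pos π f = 0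
  · rw [h, gneg_zero]
    have : gneg 1 = 0 := gneg_of_ne 1 one_ne_zero
    rw [this]
    apply iSup_le
    intro w
    have hmin : min (π w) (f w) = 0 := by
      have := le_iSup (fun w => min (π w) (f w)) w
      rw [show (⨆ w, min (π w) (f w)) = Pos π f from rfl, h] at this
      exact le_antisymm this (min (π w) (f w)).2.1
    by_cases hf : f w = 0
    · simp [hf, gneg_zero, gneg_of_ne 1 one_ne_zero]
    · have hπ : π w = 0 := by
        rcases min_eq_iff.mp hmin with h1 | h2
        · exact h1.1
        · exact absurd h2.1 hf
      simp [hπ]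
  · rw [gneg_of_ne _ h, gneg_zero]
    exact le_top
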